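/- arXiv:2604.00373 — 4 statements merged into one kernel-verified Lean document; each statement's English description precedes it below -/
import Mathlib

section
/- The set of sorted normalized side-length triples of lattice triangles is dense in the moduli space of triangles: for every (a,b,c) ∈ ℝ³ with 0 < a ≤ b ≤ c < 1 and a + b + c = 2, and every ε > 0, there exists a triple of noncollinear points in ℤ² whose sorted normalized side-length triple lies within Euclidean distance ε of (a,b,c). -/
/-- The canonical embedding of `ℤ²` into the Euclidean plane. -/
noncomputable def latticePt (p : ℤ × ℤ) : EuclideanSpace ℝ (Fin 2) :=
  WithLp.toLp 2 ![(p.1 : ℝ), (p.2 : ℝ)]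

/-- The rearrangement of a triple of reals in nondecreasing order. -/
noncomputable def sort3 (u v w : ℝ) : ℝ × ℝ × ℝ :=
  (min u (min v w), u + v + w - min u (min v w) - max u (max v w),
    max u (max v w))

/-- The sorted normalized side-length triple of a triangle with vertices
`A, B, C`: the side lengths divided by the semi-perimeter, sorted in
nondecreasing order. -/
noncomputable def sortedNormTriple (A B C : EuclideanSpace ℝ (Fin 2)) :
    ℝ × ℝ × ℝ :=
  let s : ℝ := (‖B - A‖ + ‖C - B‖ + ‖A - C‖) / 2
  sort3 (‖B - A‖ / s) (‖C - B‖ / s) (‖A - C‖ / s)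

noncomputable def pt (x y : ℝ) : EuclideanSpace ℝ (Fin 2) := WithLp.toLp 2 ![x, y]

lemma pt_sub (x y x' y' : ℝ) : pt x y - pt x' y' = pt (x-x') (y-y') := by
  ext i; fin_cases i <;> simp [pt, Pi.sub_apply]

lemma pt_smul (r x y : ℝ) : r • pt x y = pt (r*x) (r*y) := by
  ext i; fin_cases i <;> simp [pt, Pi.smul_apply]

lemma norm_pt (x y : ℝ) : ‖pt x y‖ = Real.sqrt (x^2 + y^2) := by
  have : ‖pt x y‖ = Real.sqrt (∑ i : Fin 2, ‖pt x y i‖^2) := EuclideanSpace.norm_eq _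
  rw [this, Fin.sum_univ_two]
  simp [pt, sq_abs]

noncomputable def sfun (w : ℝ × ℝ) : ℝ :=
  (1 + Real.sqrt ((w.1 - 1)^2 + w.2^2) + Real.sqrt (w.1^2 + w.2^2)) / 2

noncomputable def Phi (w : ℝ × ℝ) : ℝ × ℝ × ℝ :=
  sort3 (1 / sfun w) (Real.sqrt ((w.1 - 1)^2 + w.2^2) / sfun w)
    (Real.sqrt (w.1^2 + w.2^2) / sfun w)

lemma cont_Phi : Continuous Phi := by
  unfold Phi sort3 sfun
  refine Continuous.prodMk ?_ (Continuous.prodMk ?_ ?_) <;>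
    fun_prop (disch := intros; positivity)

lemma snt_pt (x y : ℝ) :
    sortedNormTriple (pt 0 0) (pt 1 0) (pt x y) = Phi (x, y) := by
  unfold sortedNormTriple Phi sfun
  rw [pt_sub, pt_sub, pt_sub, norm_pt, norm_pt, norm_pt]
  norm_num

lemma snt_smul (r : ℝ) (hr : 0 < r) (A B C : EuclideanSpace ℝ (Fin 2)) :
    sortedNormTriple (r • A) (r • B) (r • C) = sortedNormTriple A B C := by
  unfold sortedNormTriple
  have h : ∀ X Y : EuclideanSpace ℝ (Fin 2), ‖r • X - r • Y‖ = r * ‖X - Y‖ := by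
    intro X Y
    rw [← smul_sub, norm_smul, Real.norm_eq_abs, abs_of_pos hr]
  rw [h, h, h]
  set X := ‖B - A‖
  set Y := ‖C - B‖
  set Z := ‖A - C‖
  have e : ∀ W : ℝ, (r*W)/((r*X + r*Y + r*Z)/2) = W/((X+Y+Z)/2) := by
    intro W
    rw [show (r*X + r*Y + r*Z)/2 = r*((X+Y+Z)/2) by ring, mul_div_mul_left _ _ hr.ne']
  simp only [e]

lemma snt_lattice (n p q : ℤ) (hn : 0 < n) :
    sortedNormTriple (latticePt (0,0)) (latticePt (n,0)) (latticePt (p,q))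
      = Phi ((p:ℝ)/(n:ℝ), (q:ℝ)/(n:ℝ)) := by
  have hn' : (0:ℝ) < (n:ℝ) := by exact_mod_cast hn
  have h0 : latticePt (0,0) = (n:ℝ) • pt 0 0 := by
    rw [pt_smul]; ext i; fin_cases i <;> simp [latticePt, pt]
  have h1 : latticePt (n,0) = (n:ℝ) • pt 1 0 := by
    rw [pt_smul]; ext i; fin_cases i <;> simp [latticePt, pt]
  have h2 : latticePt (p,q) = (n:ℝ) • pt ((p:ℝ)/(n:ℝ)) ((q:ℝ)/(n:ℝ)) := by
    rw [pt_smul, mul_div_cancel₀ _ hn'.ne', mul_div_cancel₀ _ hn'.ne']; rfl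
  rw [h0, h1, h2, snt_smul _ hn', snt_pt]

noncomputable def Psi (a b c : ℝ) (w : ℝ × ℝ) : ℝ :=
  Real.sqrt (((Phi w).1 - a)^2 + ((Phi w).2.1 - b)^2 + ((Phi w).2.2 - c)^2)

lemma cont_Psi (a b c : ℝ) : Continuous (Psi a b c) := by
  unfold Psi
  have h1 : Continuous fun w => (Phi w).1 := continuous_fst.comp cont_Phi
  have h2 : Continuous fun w => (Phi w).2.1 :=
    continuous_fst.comp (continuous_snd.comp cont_Phi)
  have h3 : Continuous fun w => (Phi w).2.2 :=
    continuous_snd.comp (continuous_snd.comp cont_Phi)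
  exact Real.continuous_sqrt.comp
    ((((h1.sub continuous_const).pow 2).add ((h2.sub continuous_const).pow 2)).add
      ((h3.sub continuous_const).pow 2))

lemma noncol (n p q : ℤ) (hn : 0 < n) (hq : 0 < q) :
    ¬ Collinear ℝ ({latticePt (0,0), latticePt (n,0), latticePt (p,q)} :
        Set (EuclideanSpace ℝ (Fin 2))) := by
  intro h
  rw [collinear_iff_of_mem (Set.mem_insert _ _)] at h
  obtain ⟨v, hv⟩ := h
  obtain ⟨rB, hB⟩ := hv (latticePt (n,0)) (by simp)
  obtain ⟨rC, hC⟩ := hv (latticePt (p,q)) (by simp)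
  have hA0 : latticePt (0,0) = 0 := by
    ext i; fin_cases i <;> simp [latticePt]
  rw [hA0] at hB hC
  have hB0 : latticePt (n,0) 0 = rB * v 0 := by
    rw [hB]; simp
  have hB1 : latticePt (n,0) 1 = rB * v 1 := by
    rw [hB]; simp
  have hC1 : latticePt (p,q) 1 = rC * v 1 := by
    rw [hC]; simp
  have e0 : latticePt (n,0) 0 = (n:ℝ) := rfl
  have e1 : latticePt (n,0) 1 = (0:ℝ) := by simp [latticePt]
  have e2 : latticePt (p,q) 1 = (q:ℝ) := rfl
  rw [e0] at hB0
  rw [e1] at hB1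
  rw [e2] at hC1
  have hnR : (0:ℝ) < (n:ℝ) := by exact_mod_cast hn
  have hrB : rB ≠ 0 := by
    intro h0
    rw [h0, zero_mul] at hB0
    exact hnR.ne' hB0
  have hv1 : v 1 = 0 := by
    have := hB1.symm
    rcases mul_eq_zero.mp this with h | h
    · exact absurd h hrB
    · exact h
  rw [hv1, mul_zero] at hC1
  have : (0:ℝ) < (q:ℝ) := by exact_mod_cast hq
  exact this.ne' hC1

/-- Density of lattice triangles in the moduli space of triangles: for every
`(a,b,c)` with `0 < a ≤ b ≤ c < 1` and `a + b + c = 2` and every `ε > 0`,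
there is a triple of noncollinear lattice points whose sorted normalized
side-length triple is within Euclidean distance `ε` of `(a,b,c)`. -/
theorem stmt_0 (a b c : ℝ) (ha : 0 < a) (hab : a ≤ b) (hbc : b ≤ c)
    (hc : c < 1) (hsum : a + b + c = 2) (ε : ℝ) (hε : 0 < ε) :
    ∃ A B C : ℤ × ℤ,
      ¬ Collinear ℝ ({latticePt A, latticePt B, latticePt C} :
          Set (EuclideanSpace ℝ (Fin 2))) ∧
      Real.sqrt (((sortedNormTriple (latticePt A) (latticePt B) (latticePt C)).1 - a) ^ 2 +
          ((sortedNormTriple (latticePt A) (latticePt B) (latticePt C)).2.1 - b) ^ 2 +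
          ((sortedNormTriple (latticePt A) (latticePt B) (latticePt C)).2.2 - c) ^ 2) < ε := by
  have hb1 : b < 1 := lt_of_le_of_lt hbc hc
  have ha1 : a < 1 := lt_of_le_of_lt hab hb1
  have hb0 : 0 < b := lt_of_lt_of_le ha hab
  have hc0 : 0 < c := lt_of_lt_of_le hb0 hbc
  set x₀ : ℝ := (c^2 + b^2 - a^2)/(2*c^2) with hx₀
  set E : ℝ := (b/c)^2 - x₀^2 with hEdef
  have hE : 0 < E := by
    have heq : E = ((2-2*a)*(2-2*b)*(2-2*c)*2)/(4*c^4) := by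
      rw [hEdef, hx₀, show a = 2 - b - c by linarith]
      field_simp
      ring
    rw [heq]
    have h1 : 0 < 2-2*a := by linarith
    have h2 : 0 < 2-2*b := by linarith
    have h3 : 0 < 2-2*c := by linarith
    positivity
  set y₀ : ℝ := Real.sqrt E with hy₀
  have hy₀pos : 0 < y₀ := Real.sqrt_pos.mpr hE
  have hy₀sq : y₀^2 = E := Real.sq_sqrt hE.le
  have hsq2 : x₀^2 + y₀^2 = (b/c)^2 := by rw [hy₀sq, hEdef]; ring
  have hsq1 : (x₀-1)^2 + y₀^2 = (a/c)^2 := by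
    rw [hy₀sq, hEdef, hx₀]
    field_simp
    ring
  have hPhi : Phi (x₀, y₀) = (a, b, c) := by
    unfold Phi sfun
    simp only
    rw [hsq1, hsq2,
      Real.sqrt_sq (div_nonneg ha.le hc0.le),
      Real.sqrt_sq (div_nonneg hb0.le hc0.le)]
    have hs : (1 + a/c + b/c)/2 = 1/c := by
      field_simp
      linear_combination hsum
    rw [hs]
    have e1 : (1:ℝ)/(1/c) = c := by field_simp
    have e2 : (a/c)/(1/c) = a := by field_simp
    have e3 : (b/c)/(1/c) = b := by field_simp
    rw [e1, e2, e3]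
    unfold sort3
    rw [min_eq_left hab, min_eq_right (hab.trans hbc), max_eq_right hab,
      max_eq_left hbc]
    simp only [Prod.mk.injEq, true_and, and_true]
    ring
  -- continuity
  have hcont : Continuous (Psi a b c) := cont_Psi a b c
  have hPsi0 : Psi a b c (x₀, y₀) = 0 := by
    unfold Psi
    simp only [hPhi]
    norm_num
  have hca : ContinuousAt (Psi a b c) (x₀, y₀) := hcont.continuousAt
  rw [Metric.continuousAt_iff] at hca
  obtain ⟨δ, hδ, hball⟩ := hca ε hε
  obtain ⟨N, hN⟩ := exists_nat_gt (max (1/δ) (2/y₀))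
  have hN1 : (1:ℝ)/δ < N := lt_of_le_of_lt (le_max_left _ _) hN
  have hN2 : (2:ℝ)/y₀ < N := lt_of_le_of_lt (le_max_right _ _) hN
  have hNpos : (0:ℝ) < N := lt_trans (by positivity) hN1
  have hNZ : (0:ℤ) < (N:ℤ) := by exact_mod_cast hNpos
  set p : ℤ := round ((N:ℝ) * x₀) with hp
  set q : ℤ := round ((N:ℝ) * y₀) with hq
  have hqpos : 0 < q := by
    have h1 : |(q:ℝ) - (N:ℝ)*y₀| ≤ 1/2 := by
      rw [hq, abs_sub_comm]; exact abs_sub_round _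
    have h2 : (N:ℝ)*y₀ > 2 := by
      have := (div_lt_iff₀ hy₀pos).mp hN2
      linarith
    have : (0:ℝ) < (q:ℝ) := by
      have := abs_le.mp h1
      linarith [this.1]
    exact_mod_cast this
  refine ⟨(0,0), ((N:ℤ),0), (p,q), noncol _ _ _ hNZ hqpos, ?_⟩
  have hsnt := snt_lattice (N:ℤ) p q hNZ
  push_cast at hsnt
  rw [hsnt]
  have hdist : dist ((p:ℝ)/(N:ℝ), (q:ℝ)/(N:ℝ)) (x₀, y₀) < δ := by
    rw [Prod.dist_eq]
    have key : ∀ (t : ℝ) (m : ℤ), m = round ((N:ℝ)*t) → dist ((m:ℝ)/(N:ℝ)) t < δ := by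
      intro t m hm
      rw [Real.dist_eq]
      have h1 : |(m:ℝ) - (N:ℝ)*t| ≤ 1/2 := by
        rw [hm, abs_sub_comm]; exact abs_sub_round _
      have h2 : (m:ℝ)/(N:ℝ) - t = ((m:ℝ) - (N:ℝ)*t)/(N:ℝ) := by
        field_simp
      rw [h2, abs_div, abs_of_pos hNpos]
      rw [div_lt_iff₀ hNpos]
      have h3 : 1 < (N:ℝ) * δ := (div_lt_iff₀ hδ).mp hN1
      have h4 : (N:ℝ) * δ = δ * (N:ℝ) := mul_comm _ _
      linarith
    exact max_lt (key x₀ p hp) (key y₀ q hq)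
  have := hball hdist
  rw [Real.dist_eq, hPsi0, sub_zero] at this
  calc Real.sqrt _ = Psi a b c ((p:ℝ)/(N:ℝ), (q:ℝ)/(N:ℝ)) := rfl
    _ ≤ |Psi a b c ((p:ℝ)/(N:ℝ), (q:ℝ)/(N:ℝ))| := le_abs_self _
    _ < ε := this
end

section
/- There exists a sequence of lattice triangles whose sorted normalized side-length triples converge to (2/3, 2/3, 2/3), the point of the moduli space representing the equilateral triangle; equivalently, (2/3, 2/3, 2/3) is an accumulation point of the set of sorted normalized side-length triples of lattice triangles. -/
open Filter

lemma norm_lattice (p q : ℤ × ℤ) :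
    ‖latticePt p - latticePt q‖ =
      Real.sqrt (((p.1 : ℝ) - q.1)^2 + ((p.2 : ℝ) - q.2)^2) := by
  rw [EuclideanSpace.norm_eq]
  congr 1
  rw [Fin.sum_univ_two]
  simp [latticePt, sq_abs]

lemma noncoll (m : ℤ) (k : ℤ) (hm : 0 < m) (hk : 0 < k) :
    ¬ Collinear ℝ ({latticePt (0,0), latticePt (2*m, 0), latticePt (m, k)} :
      Set (EuclideanSpace ℝ (Fin 2))) := by
  intro h
  rw [collinear_iff_of_mem (Set.mem_insert _ _)] at h
  obtain ⟨v, hv⟩ := h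
  obtain ⟨r1, h1⟩ := hv (latticePt (2*m, 0)) (by simp)
  obtain ⟨r2, h2⟩ := hv (latticePt (m, k)) (by simp)
  have e10 := congrArg (· 0) h1
  have e11 := congrArg (· 1) h1
  have e21 := congrArg (· 1) h2
  simp only [latticePt, vadd_eq_add, PiLp.add_apply, PiLp.smul_apply, smul_eq_mul,
    Matrix.cons_val_zero, Matrix.cons_val_one, Matrix.head_cons, PiLp.toLp_apply] at e10 e11 e21
  push_cast at e10 e11 e21
  have hr1 : r1 ≠ 0 := by
    intro hr; rw [hr] at e10; simp at e10
    have : (0:ℝ) < (m:ℝ) := by exact_mod_cast hm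
    linarith
  have hv1 : v 1 = 0 := by
    have : r1 * v 1 = 0 := by linarith
    rcases mul_eq_zero.mp this with h | h
    · exact absurd h hr1
    · exact h
  rw [hv1] at e21
  have : (0:ℝ) < (k:ℝ) := by exact_mod_cast hk
  simp at e21
  linarith

lemma tendsto_sort3 {f g h : ℕ → ℝ} {a : ℝ}
    (hf : Tendsto f atTop (nhds a)) (hg : Tendsto g atTop (nhds a))
    (hh : Tendsto h atTop (nhds a)) :
    Tendsto (fun n => sort3 (f n) (g n) (h n)) atTop (nhds (a, a, a)) := by
  have hmin : Tendsto (fun n => min (f n) (min (g n) (h n))) atTop (nhds a) := by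
    simpa using hf.min (hg.min hh)
  have hmax : Tendsto (fun n => max (f n) (max (g n) (h n))) atTop (nhds a) := by
    simpa using hf.max (hg.max hh)
  have hmid : Tendsto (fun n => f n + g n + h n
      - min (f n) (min (g n) (h n)) - max (f n) (max (g n) (h n)))
      atTop (nhds a) := by
    have := (((hf.add hg).add hh).sub hmin).sub hmax
    convert this using 2
    ring
  exact hmin.prodMk_nhds (hmid.prodMk_nhds hmax)

/-- The floor ratio. -/
noncomputable def rr (n : ℕ) : ℝ := (⌊((n:ℝ)+1) * Real.sqrt 3⌋ : ℝ) / ((n:ℝ)+1)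

/-- Half the ratio of the equal sides to the base. -/
noncomputable def tt (n : ℕ) : ℝ := Real.sqrt (1 + rr n ^ 2)

lemma hr_lim : Tendsto rr atTop (nhds (Real.sqrt 3)) := by
  have hlow : Tendsto (fun n : ℕ => Real.sqrt 3 - 1 / ((n:ℝ)+1)) atTop
      (nhds (Real.sqrt 3)) := by
    simpa using tendsto_const_nhds.sub (tendsto_one_div_add_atTop_nhds_zero_nat (𝕜 := ℝ))
  refine tendsto_of_tendsto_of_tendsto_of_le_of_le hlow tendsto_const_nhds ?_ ?_
  · intro n
    have hm : (0:ℝ) < (n:ℝ)+1 := by positivity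
    have h1 : ((n:ℝ)+1) * Real.sqrt 3 - 1 ≤ (⌊((n:ℝ)+1) * Real.sqrt 3⌋ : ℝ) :=
      le_of_lt (Int.sub_one_lt_floor _)
    simp only [rr]
    rw [le_div_iff₀ hm]
    have h2 : (1/((n:ℝ)+1))*((n:ℝ)+1) = 1 := by field_simp
    nlinarith
  · intro n
    have hm : (0:ℝ) < (n:ℝ)+1 := by positivity
    simp only [rr]
    rw [div_le_iff₀ hm]
    exact le_trans (Int.floor_le _) (le_of_eq (mul_comm _ _))

lemma ht_lim : Tendsto tt atTop (nhds 2) := by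
  have h3 : Real.sqrt 3 ^ 2 = 3 := Real.sq_sqrt (by norm_num)
  have : Tendsto (fun n => 1 + rr n ^ 2) atTop (nhds 4) := by
    have := tendsto_const_nhds (x := (1:ℝ)) (f := atTop (α := ℕ)) |>.add (hr_lim.pow 2)
    rw [h3] at this
    convert this using 2 <;> norm_num
  have := this.sqrt
  rw [show Real.sqrt 4 = 2 by
    rw [show (4:ℝ) = 2^2 by norm_num, Real.sqrt_sq (by norm_num)]] at this
  exact this

lemma tt_pos (n : ℕ) : 0 < tt n := by
  have : (1:ℝ) ≤ 1 + rr n ^ 2 := by nlinarith [sq_nonneg (rr n)]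
  have := Real.sqrt_le_sqrt this
  simp only [tt]
  nlinarith [Real.sqrt_one, Real.sqrt_nonneg (1 + rr n ^ 2)]

/-- There is a sequence of lattice triangles whose sorted normalized
side-length triples converge to `(2/3, 2/3, 2/3)`, the point of the moduli
space representing the equilateral triangle. -/
theorem stmt_6 :
    ∃ A B C : ℕ → ℤ × ℤ,
      (∀ n, ¬ Collinear ℝ
        ({latticePt (A n), latticePt (B n), latticePt (C n)} :
          Set (EuclideanSpace ℝ (Fin 2)))) ∧
      Tendsto
        (fun n => sortedNormTriple (latticePt (A n)) (latticePt (B n)) (latticePt (C n)))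
        atTop (nhds (2/3, 2/3, 2/3)) := by
  have hs3 : (1:ℝ) ≤ Real.sqrt 3 := by
    rw [show (1:ℝ) = Real.sqrt 1 by simp]
    exact Real.sqrt_le_sqrt (by norm_num)
  refine ⟨fun _ => (0,0), fun n => (2*((n:ℤ)+1), 0),
    fun n => ((n:ℤ)+1, ⌊((n:ℝ)+1) * Real.sqrt 3⌋), ?_, ?_⟩
  · intro n
    apply noncoll
    · positivity
    · rw [Int.lt_iff_add_one_le, zero_add, Int.le_floor]
      have : (0:ℝ) ≤ (n:ℝ) := Nat.cast_nonneg n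
      push_cast
      nlinarith
  · have key : ∀ n : ℕ,
        sortedNormTriple (latticePt (0,0)) (latticePt (2*((n:ℤ)+1), 0))
          (latticePt ((n:ℤ)+1, ⌊((n:ℝ)+1) * Real.sqrt 3⌋)) =
        sort3 (2/(1 + tt n)) (tt n/(1 + tt n)) (tt n/(1 + tt n)) := by
      intro n
      have hm : (0:ℝ) < (n:ℝ)+1 := by positivity
      have htp := tt_pos n
      have h1t : (0:ℝ) < 1 + tt n := by linarith
      rw [sortedNormTriple, norm_lattice, norm_lattice, norm_lattice]
      push_cast
      set m : ℝ := (n:ℝ)+1 with hmdef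
      set K : ℝ := (⌊((n:ℝ)+1) * Real.sqrt 3⌋ : ℝ) with hK
      have e1 : Real.sqrt ((2*m - 0)^2 + ((0:ℝ)-0)^2) = 2*m := by
        rw [show (2*m - 0)^2 + ((0:ℝ)-0)^2 = (2*m)^2 by ring, Real.sqrt_sq (by linarith)]
      have e2 : Real.sqrt ((m - 2*m)^2 + (K-0)^2) = m * tt n := by
        rw [tt, ← Real.sqrt_sq hm.le, ← Real.sqrt_mul (sq_nonneg m)]
        congr 1
        rw [rr, ← hmdef, ← hK]
        field_simp
        rw [Real.sq_sqrt (sq_nonneg m)]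
        ring
      have e3 : Real.sqrt (((0:ℝ) - m)^2 + (0 - K)^2) = m * tt n := by
        rw [show ((0:ℝ) - m)^2 + (0 - K)^2 = (m - 2*m)^2 + (K-0)^2 by ring, e2]
      rw [e1, e2, e3]
      have hs : (2*m + m * tt n + m * tt n)/2 = m * (1 + tt n) := by ring
      rw [hs]
      have d1 : 2*m/(m*(1 + tt n)) = 2/(1 + tt n) := by
        rw [show 2*m = m*2 by ring, mul_div_mul_left _ _ (ne_of_gt hm)]
      have d2 : m * tt n/(m*(1 + tt n)) = tt n/(1 + tt n) :=
        mul_div_mul_left _ _ (ne_of_gt hm)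
      rw [d1, d2]
    rw [funext key]
    have h1t : Tendsto (fun n => 1 + tt n) atTop (nhds 3) := by
      have := (tendsto_const_nhds (x := (1:ℝ)) (f := atTop (α := ℕ))).add ht_lim
      convert this using 2; norm_num
    have hu : Tendsto (fun n => 2/(1 + tt n)) atTop (nhds (2/3)) :=
      tendsto_const_nhds.div h1t (by norm_num)
    have hv : Tendsto (fun n => tt n/(1 + tt n)) atTop (nhds (2/3)) :=
      ht_lim.div h1t (by norm_num)
    exact tendsto_sort3 hu hv hv
end

section
/- The Lebesgue area of the planar region {(a,b) ∈ ℝ² : 0 < a < 1, 0 < b < 1, a + b > 1, (2 − a − b)² > a² + b²}, corresponding to obtuse triangles with obtuse angle opposite the side of normalized length c = 2 − a − b, equals 3/2 − 2·ln 2. -/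
open MeasureTheory Set

private lemma aux_cont : ContinuousOn (fun x : ℝ => (2 - 2 / (2 - x)) - (1 - x)) (Icc 0 1) := by
  apply ContinuousOn.sub
  · apply ContinuousOn.sub continuousOn_const
    apply ContinuousOn.div continuousOn_const (by fun_prop)
    intro x hx
    simp only [mem_Icc] at hx
    nlinarith [hx.1, hx.2]
  · fun_prop

private lemma aux_integral :
    ∫ y in Ioo (0:ℝ) 1, ((fun x : ℝ => 2 - 2 / (2 - x)) - fun x : ℝ => 1 - x) y
      = 3 / 2 - 2 * Real.log 2 := by
  rw [← integral_Ioc_eq_integral_Ioo, ← intervalIntegral.integral_of_le (by norm_num : (0:ℝ) ≤ 1)]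
  have h : ∀ x ∈ uIcc (0:ℝ) 1,
      HasDerivAt (fun x : ℝ => x ^ 2 / 2 + x + 2 * Real.log (2 - x))
        (((fun x : ℝ => 2 - 2 / (2 - x)) - fun x : ℝ => 1 - x) x) x := by
    intro x hx
    rw [uIcc_of_le (by norm_num)] at hx
    have h2 : (2 : ℝ) - x ≠ 0 := by
      simp only [mem_Icc] at hx; nlinarith [hx.1, hx.2]
    have := (((hasDerivAt_pow 2 x).div_const 2).add (hasDerivAt_id x)).add
      ((((hasDerivAt_id x).const_sub 2).log h2).const_mul 2)
    refine this.congr_deriv ?_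
    simp only [Pi.sub_apply, id]
    field_simp
    ring
  rw [intervalIntegral.integral_eq_sub_of_hasDerivAt h]
  · norm_num [Real.log_one]
  · apply ContinuousOn.intervalIntegrable
    rw [uIcc_of_le (by norm_num)]
    exact aux_cont

/-- The Lebesgue area of the region of the Teichmüller space of triangles
corresponding to obtuse triangles with obtuse angle opposite the side of
normalized length `c = 2 - a - b` equals `3/2 - 2 ln 2`. -/
theorem stmt_10 :
    volume {p : ℝ × ℝ | 0 < p.1 ∧ p.1 < 1 ∧ 0 < p.2 ∧ p.2 < 1 ∧ p.1 + p.2 > 1 ∧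
        (2 - p.1 - p.2) ^ 2 > p.1 ^ 2 + p.2 ^ 2}
      = ENNReal.ofReal (3 / 2 - 2 * Real.log 2) := by
  have hset : {p : ℝ × ℝ | 0 < p.1 ∧ p.1 < 1 ∧ 0 < p.2 ∧ p.2 < 1 ∧ p.1 + p.2 > 1 ∧
        (2 - p.1 - p.2) ^ 2 > p.1 ^ 2 + p.2 ^ 2}
      = regionBetween (fun x => 1 - x) (fun x => 2 - 2 / (2 - x)) (Ioo 0 1) := by
    ext ⟨a, b⟩
    simp only [mem_setOf_eq, regionBetween, mem_Ioo]
    constructor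
    · rintro ⟨ha0, ha1, hb0, hb1, hab, hq⟩
      have h2a : (0:ℝ) < 2 - a := by linarith
      refine ⟨⟨ha0, ha1⟩, by linarith, ?_⟩
      rw [show (2:ℝ) - 2 / (2 - a) = (2 * (2 - a) - 2) / (2 - a) by field_simp,
        lt_div_iff₀ h2a]
      nlinarith
    · rintro ⟨⟨ha0, ha1⟩, hfb, hbg⟩
      have h2a : (0:ℝ) < 2 - a := by linarith
      rw [show (2:ℝ) - 2 / (2 - a) = (2 * (2 - a) - 2) / (2 - a) by field_simp,
        lt_div_iff₀ h2a] at hbg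
      refine ⟨ha0, ha1, by linarith, by nlinarith, by linarith, by nlinarith⟩
  rw [hset, Measure.volume_eq_prod,
    volume_regionBetween_eq_integral
      (((by fun_prop : ContinuousOn (fun x : ℝ => 1 - x) (Icc 0 1)).integrableOn_Icc).mono_set Ioo_subset_Icc_self)
      ((by
        apply ContinuousOn.sub continuousOn_const
        apply ContinuousOn.div continuousOn_const (by fun_prop)
        intro x hx
        simp only [mem_Icc] at hx
        nlinarith [hx.1, hx.2] : ContinuousOn (fun x : ℝ => 2 - 2 / (2 - x)) (Icc 0 1)).integrableOn_Icc.mono_set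
        Ioo_subset_Icc_self)
      measurableSet_Ioo
      (fun x hx => by
        simp only [mem_Ioo] at hx
        have h2a : (0:ℝ) < 2 - x := by linarith [hx.2]
        rw [show (2:ℝ) - 2 / (2 - x) = (2 * (2 - x) - 2) / (2 - x) by field_simp,
          le_div_iff₀ h2a]
        nlinarith [hx.1, hx.2]),
    aux_integral]
end

section
/- The Lebesgue area of the subset of T = {(a,b) ∈ ℝ² : 0 < a < 1, 0 < b < 1, a + b > 1} consisting of those (a,b) for which, with c = 2 − a − b, at least one of c² > a² + b², b² > a² + c², a² > b² + c² holds (i.e., the locus of obtuse triangles), equals 9/2 − 6·ln 2. -/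
open MeasureTheory Set

private lemma key_integral :
    ∫ x in Set.Ioo (0:ℝ) 1, (x + 1 - 2 / (2 - x)) = 3 / 2 - 2 * Real.log 2 := by
  rw [← integral_Ioc_eq_integral_Ioo,
    ← intervalIntegral.integral_of_le (zero_le_one (α := ℝ))]
  have h : ∀ x ∈ Set.uIcc (0:ℝ) 1,
      HasDerivAt (fun x : ℝ => x ^ 2 / 2 + x + 2 * Real.log (2 - x))
        (x + 1 - 2 / (2 - x)) x := by
    intro x hx
    rw [Set.uIcc_of_le zero_le_one] at hx
    have hx2 : (2:ℝ) - x ≠ 0 := by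
      have := hx.2; intro h; nlinarith
    have h1 : HasDerivAt (fun x : ℝ => x ^ 2 / 2 + x) (x + 1) x := by
      have := ((hasDerivAt_pow 2 x).div_const 2).add (hasDerivAt_id x)
      simp at this; exact this
    have h2 : HasDerivAt (fun x : ℝ => 2 - x) (-1) x := by
      have := (hasDerivAt_const x (2:ℝ)).sub (hasDerivAt_id x)
      simp at this; exact this
    have h3 : HasDerivAt (fun x : ℝ => Real.log (2 - x)) (-1 / (2 - x)) x :=
      (h2.log hx2)
    have : HasDerivAt (fun x : ℝ => x ^ 2 / 2 + x + 2 * Real.log (2 - x)) _ x :=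
      h1.add (h3.const_mul 2)
    convert this using 1
    ring
  have hint : IntervalIntegrable (fun x : ℝ => x + 1 - 2 / (2 - x)) volume 0 1 := by
    apply ContinuousOn.intervalIntegrable
    apply ContinuousOn.sub
    · fun_prop
    · apply ContinuousOn.div continuousOn_const (by fun_prop)
      intro x hx
      rw [Set.uIcc_of_le zero_le_one] at hx
      have := hx.2; intro h; nlinarith
  rw [intervalIntegral.integral_eq_sub_of_hasDerivAt h hint]
  norm_num [Real.log_one]

/-- The Lebesgue area of the obtuse locus in the Teichmüller space of triangles
(in the coordinates `(a,b)` with `c = 2 - a - b`) equals `9/2 - 6 ln 2`. -/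
theorem stmt_12 :
    volume {p : ℝ × ℝ | (0 < p.1 ∧ p.1 < 1 ∧ 0 < p.2 ∧ p.2 < 1 ∧ p.1 + p.2 > 1) ∧
        ((2 - p.1 - p.2) ^ 2 > p.1 ^ 2 + p.2 ^ 2 ∨
         p.2 ^ 2 > p.1 ^ 2 + (2 - p.1 - p.2) ^ 2 ∨
         p.1 ^ 2 > p.2 ^ 2 + (2 - p.1 - p.2) ^ 2)}
      = ENNReal.ofReal (9 / 2 - 6 * Real.log 2) := by
  set T : ℝ × ℝ → Prop := fun p =>
    0 < p.1 ∧ p.1 < 1 ∧ 0 < p.2 ∧ p.2 < 1 ∧ p.1 + p.2 > 1 with hT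
  set A : Set (ℝ × ℝ) := {p | T p ∧ (2 - p.1 - p.2) ^ 2 > p.1 ^ 2 + p.2 ^ 2} with hA
  set B : Set (ℝ × ℝ) := {p | T p ∧ p.2 ^ 2 > p.1 ^ 2 + (2 - p.1 - p.2) ^ 2} with hB
  set C : Set (ℝ × ℝ) := {p | T p ∧ p.1 ^ 2 > p.2 ^ 2 + (2 - p.1 - p.2) ^ 2} with hC
  have hSet : {p : ℝ × ℝ | (0 < p.1 ∧ p.1 < 1 ∧ 0 < p.2 ∧ p.2 < 1 ∧ p.1 + p.2 > 1) ∧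
        ((2 - p.1 - p.2) ^ 2 > p.1 ^ 2 + p.2 ^ 2 ∨
         p.2 ^ 2 > p.1 ^ 2 + (2 - p.1 - p.2) ^ 2 ∨
         p.1 ^ 2 > p.2 ^ 2 + (2 - p.1 - p.2) ^ 2)} = A ∪ B ∪ C := by
    ext p
    simp only [hA, hB, hC, hT, Set.mem_union, Set.mem_setOf_eq]
    tauto
  -- A as a region between graphs
  have hAeq : A = regionBetween (fun a : ℝ => 1 - a)
      (fun a : ℝ => (2 - 2 * a) / (2 - a)) (Set.Ioo 0 1) := by
    ext ⟨a, b⟩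
    simp only [hA, hT, regionBetween, Set.mem_setOf_eq, Set.mem_Ioo]
    constructor
    · rintro ⟨⟨ha0, ha1, hb0, hb1, hab⟩, hc⟩
      have h2a : (0:ℝ) < 2 - a := by linarith
      refine ⟨⟨ha0, ha1⟩, by linarith, ?_⟩
      rw [lt_div_iff₀ h2a]
      nlinarith
    · rintro ⟨⟨ha0, ha1⟩, hb1, hb2⟩
      have h2a : (0:ℝ) < 2 - a := by linarith
      rw [lt_div_iff₀ h2a] at hb2
      have hbu : b < 1 := by nlinarith
      exact ⟨⟨ha0, ha1, by linarith, hbu, by linarith⟩, by nlinarith⟩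
  -- B as a region between graphs
  have hBeq : B = regionBetween (fun a : ℝ => (a ^ 2 - 2 * a + 2) / (2 - a))
      (fun _ : ℝ => 1) (Set.Ioo 0 1) := by
    ext ⟨a, b⟩
    simp only [hB, hT, regionBetween, Set.mem_setOf_eq, Set.mem_Ioo]
    constructor
    · rintro ⟨⟨ha0, ha1, hb0, hb1, hab⟩, hc⟩
      have h2a : (0:ℝ) < 2 - a := by linarith
      refine ⟨⟨ha0, ha1⟩, ?_, hb1⟩
      rw [div_lt_iff₀ h2a]
      nlinarith
    · rintro ⟨⟨ha0, ha1⟩, hb1, hb2⟩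
      have h2a : (0:ℝ) < 2 - a := by linarith
      rw [div_lt_iff₀ h2a] at hb1
      have hb0 : 0 < b := by nlinarith
      have hab : a + b > 1 := by nlinarith
      exact ⟨⟨ha0, ha1, hb0, hb2, hab⟩, by nlinarith⟩
  -- C is the swap of B
  have hCeq : C = Prod.swap ⁻¹' B := by
    ext ⟨a, b⟩
    simp only [hC, hB, hT, Set.mem_preimage, Prod.swap_prod_mk, Set.mem_setOf_eq]
    constructor
    · rintro ⟨⟨h1, h2, h3, h4, h5⟩, h6⟩
      exact ⟨⟨h3, h4, h1, h2, by linarith⟩, by nlinarith⟩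
    · rintro ⟨⟨h1, h2, h3, h4, h5⟩, h6⟩
      exact ⟨⟨h3, h4, h1, h2, by linarith⟩, by nlinarith⟩
  -- measurability
  have hmf1 : Measurable (fun a : ℝ => 1 - a) := by fun_prop
  have hmg1 : Measurable (fun a : ℝ => (2 - 2 * a) / (2 - a)) := by
    apply Measurable.div <;> fun_prop
  have hmf2 : Measurable (fun a : ℝ => (a ^ 2 - 2 * a + 2) / (2 - a)) := by
    apply Measurable.div <;> fun_prop
  have hAm : MeasurableSet A := by
    rw [hAeq]; exact measurableSet_regionBetween hmf1 hmg1 measurableSet_Ioo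
  have hBm : MeasurableSet B := by
    rw [hBeq]; exact measurableSet_regionBetween hmf2 measurable_const measurableSet_Ioo
  have hCm : MeasurableSet C := by
    rw [hCeq]; exact hBm.preimage measurable_swap
  -- disjointness
  have hABd : Disjoint A B := by
    rw [Set.disjoint_left]
    rintro ⟨a, b⟩ ⟨⟨h1, _, h3, _, _⟩, h6⟩ ⟨_, h7⟩
    nlinarith
  have hACd : Disjoint A C := by
    rw [Set.disjoint_left]
    rintro ⟨a, b⟩ ⟨⟨h1, _, h3, _, _⟩, h6⟩ ⟨_, h7⟩
    nlinarith
  have hBCd : Disjoint B C := by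
    rw [Set.disjoint_left]
    rintro ⟨a, b⟩ ⟨⟨h1, _, h3, _, h5⟩, h6⟩ ⟨_, h7⟩
    nlinarith
  -- volume of A
  have I : ℝ := 0
  have hvolA : volume A = ENNReal.ofReal (3 / 2 - 2 * Real.log 2) := by
    rw [hAeq, Measure.volume_eq_prod]
    rw [volume_regionBetween_eq_integral]
    · congr 1
      rw [← key_integral]
      apply setIntegral_congr_fun measurableSet_Ioo
      intro x hx
      have h2x : (2:ℝ) - x ≠ 0 := by intro h; nlinarith [hx.2]
      simp only [Pi.sub_apply]
      field_simp
      ring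
    · exact ((continuousOn_const.sub continuousOn_id).integrableOn_Icc).mono_set
        Set.Ioo_subset_Icc_self
    · refine ((ContinuousOn.div (by fun_prop) (by fun_prop) ?_).integrableOn_Icc).mono_set
        Set.Ioo_subset_Icc_self
      intro x hx
      intro h; nlinarith [hx.2]
    · exact measurableSet_Ioo
    · intro x hx
      have h2x : (0:ℝ) < 2 - x := by nlinarith [hx.2]
      rw [le_div_iff₀ h2x]
      nlinarith [hx.1, hx.2]
  -- volume of B
  have hvolB : volume B = ENNReal.ofReal (3 / 2 - 2 * Real.log 2) := by
    rw [hBeq, Measure.volume_eq_prod]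
    rw [volume_regionBetween_eq_integral]
    · congr 1
      rw [← key_integral]
      apply setIntegral_congr_fun measurableSet_Ioo
      intro x hx
      have h2x : (2:ℝ) - x ≠ 0 := by intro h; nlinarith [hx.2]
      simp only [Pi.sub_apply]
      field_simp
      ring
    · refine ((ContinuousOn.div (by fun_prop) (by fun_prop) ?_).integrableOn_Icc).mono_set
        Set.Ioo_subset_Icc_self
      intro x hx
      intro h; nlinarith [hx.2]
    · exact integrableOn_const (by simp) (by simp)
    · exact measurableSet_Ioo
    · intro x hx
      have h2x : (0:ℝ) < 2 - x := by nlinarith [hx.2]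
      rw [div_le_iff₀ h2x]
      nlinarith [hx.1, hx.2]
  -- volume of C
  have hswap : MeasurePreserving (Prod.swap : ℝ × ℝ → ℝ × ℝ) volume volume := by
    rw [Measure.volume_eq_prod]
    exact Measure.measurePreserving_swap
  have hvolC : volume C = ENNReal.ofReal (3 / 2 - 2 * Real.log 2) := by
    rw [hCeq, hswap.measure_preimage hBm.nullMeasurableSet, hvolB]
  -- put it together
  rw [hSet, measure_union (hACd.union_left hBCd) hCm,
    measure_union hABd hBm, hvolA, hvolB, hvolC]
  have hlog : Real.log 2 < 0.6931471808 := Real.log_two_lt_d9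
  have hpos : (0:ℝ) ≤ 3 / 2 - 2 * Real.log 2 := by nlinarith
  rw [← ENNReal.ofReal_add hpos hpos, ← ENNReal.ofReal_add (by nlinarith) hpos]
  congr 1
  ring
end
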